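/- Let Q be a left quasigroup and α, β congruences. Then Dis^{α∧β} = Dis^α ∩ Dis^β and Dis_{α∨β} = Dis_α · Dis_β. -/
import Mathlib


structure LeftQuasigroup (Q : Type*) where
  op : Q → Q → Q
  dv : Q → Q → Q
  dv_op : ∀ x y, dv x (op x y) = y
  op_dv : ∀ x y, op x (dv x y) = y

namespace LeftQuasigroup

variable {Q : Type*} (S : LeftQuasigroup Q)

/-- The left translation by `a`, as a permutation of `Q`. -/
def L (a : Q) : Equiv.Perm Q :=
  ⟨S.op a, S.dv a, S.dv_op a, S.op_dv a⟩

/-- The left multiplication group. -/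
def LMlt : Subgroup (Equiv.Perm Q) :=
  Subgroup.closure (Set.range S.L)

/-- The displacement group. -/
def Dis : Subgroup (Equiv.Perm Q) :=
  Subgroup.closure { f | ∃ a b, f = S.L a * (S.L b)⁻¹ }

/-- `α` is a congruence of the left quasigroup. -/
def IsCongruence (α : Q → Q → Prop) : Prop :=
  Equivalence α ∧
  (∀ a b c d, α a b → α c d → α (S.op a c) (S.op b d)) ∧
  (∀ a b c d, α a b → α c d → α (S.dv a c) (S.dv b d))

/-- The displacement group relative to `α`: the smallest normal subgroup of
`LMlt` containing all `L a * (L b)⁻¹` with `α a b`, given explicitly as the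
subgroup generated by the `LMlt`-conjugates of such elements. -/
def DisRel (α : Q → Q → Prop) : Subgroup (Equiv.Perm Q) :=
  Subgroup.closure
    { f | ∃ g ∈ S.LMlt, ∃ a b, α a b ∧ f = g * (S.L a * (S.L b)⁻¹) * g⁻¹ }

/-- The set `Dis^α = {h ∈ Dis(Q) : h(a) α a for all a}`. -/
def DisUpSet (α : Q → Q → Prop) : Set (Equiv.Perm Q) :=
  { h | h ∈ S.Dis ∧ ∀ a, α (h a) a }

/-- Left self-distributivity, making a left quasigroup a rack. -/
def IsRack : Prop :=
  ∀ x y z, S.op x (S.op y z) = S.op (S.op x y) (S.op x z)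

end LeftQuasigroup

open LeftQuasigroup

open Pointwise

section Aux

variable {Q : Type*} (S : LeftQuasigroup Q)

theorem aux_L_mem (a : Q) : S.L a ∈ S.LMlt :=
  Subgroup.subset_closure ⟨a, rfl⟩

theorem aux_DisRel_le_LMlt (γ : Q → Q → Prop) : S.DisRel γ ≤ S.LMlt := by
  apply (Subgroup.closure_le _).mpr
  rintro f ⟨g, hg, a, b, -, rfl⟩
  exact mul_mem (mul_mem hg (mul_mem (aux_L_mem S a) (inv_mem (aux_L_mem S b)))) (inv_mem hg)

theorem aux_conj (γ : Q → Q → Prop) {g x : Equiv.Perm Q} (hg : g ∈ S.LMlt)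
    (hx : x ∈ S.DisRel γ) : g * x * g⁻¹ ∈ S.DisRel γ := by
  induction hx using Subgroup.closure_induction with
  | mem y hy =>
    obtain ⟨g', hg', a, b, hab, rfl⟩ := hy
    have h : g * (g' * (S.L a * (S.L b)⁻¹) * g'⁻¹) * g⁻¹
        = (g * g') * (S.L a * (S.L b)⁻¹) * (g * g')⁻¹ := by group
    rw [h]
    exact Subgroup.subset_closure ⟨g * g', mul_mem hg hg', a, b, hab, rfl⟩
  | one => simpa using one_mem _
  | mul x y _ _ ihx ihy =>
    have h : g * (x * y) * g⁻¹ = (g * x * g⁻¹) * (g * y * g⁻¹) := by group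
    rw [h]; exact mul_mem ihx ihy
  | inv x _ ih =>
    have h : g * x⁻¹ * g⁻¹ = (g * x * g⁻¹)⁻¹ := by group
    rw [h]; exact inv_mem ih

/-- `EqvGen (α ∪ β)` is a congruence. -/
theorem aux_eqvGen_congruence {α β : Q → Q → Prop} (hα : S.IsCongruence α)
    (hβ : S.IsCongruence β) :
    S.IsCongruence (Relation.EqvGen (fun a b => α a b ∨ β a b)) := by
  set r : Q → Q → Prop := fun a b => α a b ∨ β a b with hr
  have key : ∀ (f : Q → Q → Q),
      (∀ a b c d, α a b → α c d → α (f a c) (f b d)) →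
      (∀ a b c d, β a b → β c d → β (f a c) (f b d)) →
      ∀ a b c d, Relation.EqvGen r a b → Relation.EqvGen r c d →
        Relation.EqvGen r (f a c) (f b d) := by
    intro f hfα hfβ a b c d hab hcd
    have left : ∀ a b c, Relation.EqvGen r a b → Relation.EqvGen r (f a c) (f b c) := by
      intro a b c h
      induction h with
      | rel x y hxy =>
        rcases hxy with h | h
        · exact Relation.EqvGen.rel _ _ (Or.inl (hfα _ _ _ _ h (hα.1.refl c)))
        · exact Relation.EqvGen.rel _ _ (Or.inr (hfβ _ _ _ _ h (hβ.1.refl c)))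
      | refl x => exact Relation.EqvGen.refl _
      | symm x y _ ih => exact Relation.EqvGen.symm _ _ ih
      | trans x y z _ _ ih1 ih2 => exact Relation.EqvGen.trans _ _ _ ih1 ih2
    have right : ∀ a c d, Relation.EqvGen r c d → Relation.EqvGen r (f a c) (f a d) := by
      intro a c d h
      induction h with
      | rel x y hxy =>
        rcases hxy with h | h
        · exact Relation.EqvGen.rel _ _ (Or.inl (hfα _ _ _ _ (hα.1.refl a) h))
        · exact Relation.EqvGen.rel _ _ (Or.inr (hfβ _ _ _ _ (hβ.1.refl a) h))
      | refl x => exact Relation.EqvGen.refl _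
      | symm x y _ ih => exact Relation.EqvGen.symm _ _ ih
      | trans x y z _ _ ih1 ih2 => exact Relation.EqvGen.trans _ _ _ ih1 ih2
    exact Relation.EqvGen.trans _ _ _ (left a b c hab) (right b c d hcd)
  exact ⟨Relation.EqvGen.is_equivalence r, key S.op hα.2.1 hβ.2.1, key S.dv hα.2.2 hβ.2.2⟩

end Aux

/-- `Dis^{α∧β} = Dis^α ∩ Dis^β` and `Dis_{α∨β} = Dis_α · Dis_β`. -/
theorem stmt_9 {Q : Type*} (S : LeftQuasigroup Q) (α β : Q → Q → Prop)
    (hα : S.IsCongruence α) (hβ : S.IsCongruence β) :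
    S.DisUpSet (fun a b => α a b ∧ β a b) = S.DisUpSet α ∩ S.DisUpSet β ∧
    (S.DisRel (fun a b => ∀ γ : Q → Q → Prop, S.IsCongruence γ →
        (∀ x y, α x y → γ x y) → (∀ x y, β x y → γ x y) → γ a b) :
          Set (Equiv.Perm Q)) =
      (S.DisRel α : Set (Equiv.Perm Q)) * (S.DisRel β : Set (Equiv.Perm Q)) := by
  constructor
  · -- Part 1
    ext h
    constructor
    · rintro ⟨hd, hab⟩
      exact ⟨⟨hd, fun a => (hab a).1⟩, ⟨hd, fun a => (hab a).2⟩⟩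
    · rintro ⟨⟨hd, h1⟩, ⟨_, h2⟩⟩
      exact ⟨hd, fun a => ⟨h1 a, h2 a⟩⟩
  · -- Part 2
    set J : Q → Q → Prop := fun a b => ∀ γ : Q → Q → Prop, S.IsCongruence γ →
        (∀ x y, α x y → γ x y) → (∀ x y, β x y → γ x y) → γ a b with hJ
    set r : Q → Q → Prop := fun a b => α a b ∨ β a b with hr
    have hcong := aux_eqvGen_congruence S hα hβ
    -- J coincides with the equivalence closure of α ∪ β
    have hJE : ∀ a b, J a b → Relation.EqvGen r a b := fun a b h =>
      h _ hcong (fun x y hxy => Relation.EqvGen.rel _ _ (Or.inl hxy))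
        (fun x y hxy => Relation.EqvGen.rel _ _ (Or.inr hxy))
    set A := S.DisRel α with hA
    set B := S.DisRel β with hB
    -- DisRel J = A ⊔ B as subgroups
    have hsub : S.DisRel J = A ⊔ B := by
      apply le_antisymm
      · apply (Subgroup.closure_le _).mpr
        rintro f ⟨g, hg, a, b, hab, rfl⟩
        have key : ∀ a b, Relation.EqvGen r a b →
            ∀ g, g ∈ S.LMlt → g * (S.L a * (S.L b)⁻¹) * g⁻¹ ∈ A ⊔ B := by
          intro a b h
          induction h with
          | rel x y hxy =>
            intro g hg
            rcases hxy with h | h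
            · exact le_sup_left (a := A) (b := B)
                (Subgroup.subset_closure ⟨g, hg, x, y, h, rfl⟩)
            · exact le_sup_right (a := A) (b := B)
                (Subgroup.subset_closure ⟨g, hg, x, y, h, rfl⟩)
          | refl x =>
            intro g hg
            have h : g * (S.L x * (S.L x)⁻¹) * g⁻¹ = 1 := by group
            rw [h]; exact one_mem _
          | symm x y _ ih =>
            intro g hg
            have h : g * (S.L y * (S.L x)⁻¹) * g⁻¹
                = (g * (S.L x * (S.L y)⁻¹) * g⁻¹)⁻¹ := by group
            rw [h]; exact inv_mem (ih g hg)
          | trans x y z _ _ ih1 ih2 =>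
            intro g hg
            have h : g * (S.L x * (S.L z)⁻¹) * g⁻¹
                = (g * (S.L x * (S.L y)⁻¹) * g⁻¹) * (g * (S.L y * (S.L z)⁻¹) * g⁻¹) := by
              group
            rw [h]; exact mul_mem (ih1 g hg) (ih2 g hg)
        exact key a b (hJE a b hab) g hg
      · apply sup_le
        · apply (Subgroup.closure_le _).mpr
          rintro f ⟨g, hg, a, b, hab, rfl⟩
          exact Subgroup.subset_closure ⟨g, hg, a, b, fun γ hγ h1 _ => h1 a b hab, rfl⟩
        · apply (Subgroup.closure_le _).mpr
          rintro f ⟨g, hg, a, b, hab, rfl⟩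
          exact Subgroup.subset_closure ⟨g, hg, a, b, fun γ hγ _ h2 => h2 a b hab, rfl⟩
    rw [hsub]
    -- the product set ↑A * ↑B is a subgroup since A normalizes B
    have hAL : A ≤ S.LMlt := aux_DisRel_le_LMlt S α
    let P : Subgroup (Equiv.Perm Q) :=
      { carrier := (A : Set (Equiv.Perm Q)) * (B : Set (Equiv.Perm Q))
        one_mem' := ⟨1, one_mem _, 1, one_mem _, mul_one 1⟩
        mul_mem' := by
          rintro x y ⟨a1, ha1, b1, hb1, rfl⟩ ⟨a2, ha2, b2, hb2, rfl⟩
          refine ⟨a1 * a2, mul_mem ha1 ha2, (a2⁻¹ * b1 * (a2⁻¹)⁻¹) * b2,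
            mul_mem (aux_conj S β (inv_mem (hAL ha2)) hb1) hb2, ?_⟩
          group
        inv_mem' := by
          rintro x ⟨a, ha, b, hb, rfl⟩
          refine ⟨a⁻¹, inv_mem ha, a * b⁻¹ * a⁻¹, aux_conj S β (hAL ha) (inv_mem hb), ?_⟩
          group }
    have hle : A ⊔ B ≤ P :=
      sup_le (fun x hx => ⟨x, hx, 1, one_mem _, mul_one x⟩)
        (fun x hx => ⟨1, one_mem _, x, hx, one_mul x⟩)
    apply Set.Subset.antisymm
    · exact fun x hx => hle hx
    · rintro x ⟨a, ha, b, hb, rfl⟩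
      exact mul_mem ((le_sup_left : A ≤ A ⊔ B) ha) ((le_sup_right : B ≤ A ⊔ B) hb)
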